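/- The total dual mass dominates b_0 times R: Σ_{i=0}^∞ μ*_i ≥ b_0 · Σ_{i=0}^∞ (1/(μ_i b_i)) Σ_{j=0}^i μ_j = b_0 · R (as values in [0,∞]). In particular, if R = ∞ then Σ_{i=0}^∞ μ*_i = ∞. -/

import Mathlib

/-- `μ_0 = 1`, `μ_i = (b_0 ⋯ b_{i-1})/(a_1 ⋯ a_i)` for `i ≥ 1`. -/
noncomputable def bdMu (a b : ℕ → ℝ) (i : ℕ) : ℝ :=
  (∏ k ∈ Finset.range i, b k) / (∏ k ∈ Finset.range i, a (k + 1))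

/-- The stationary weights `π_i = μ_i / μ`, where `μ = Σ_j μ_j`. -/
noncomputable def bdPi (a b : ℕ → ℝ) (i : ℕ) : ℝ :=
  bdMu a b i / ∑' j : ℕ, bdMu a b j

/-- `H_i = Σ_{j=0}^i π_j`. -/
noncomputable def bdH (a b : ℕ → ℝ) (i : ℕ) : ℝ :=
  ∑ j ∈ Finset.range (i + 1), bdPi a b j

/-- Dual death rates `a*_i = (H_{i−1}/H_i)·b_i` (used for `i ≥ 1`). -/
noncomputable def bdAStar (a b : ℕ → ℝ) (i : ℕ) : ℝ :=
  (bdH a b (i - 1) / bdH a b i) * b i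

/-- Dual birth rates `b*_i = (H_{i+1}/H_i)·a_{i+1}`. -/
noncomputable def bdBStar (a b : ℕ → ℝ) (i : ℕ) : ℝ :=
  (bdH a b (i + 1) / bdH a b i) * a (i + 1)

/-- Dual masses `μ*_0 = 1`, `μ*_i = (b*_0 ⋯ b*_{i−1})/(a*_1 ⋯ a*_i)`. -/
noncomputable def bdMuStar (a b : ℕ → ℝ) (i : ℕ) : ℝ :=
  bdMu (bdAStar a b) (bdBStar a b) i

section aux
variable (a b : ℕ → ℝ)

lemma bdMu_zero : bdMu a b 0 = 1 := by simp [bdMu]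

lemma bdMu_succ (i : ℕ) : bdMu a b (i + 1) = bdMu a b i * (b i / a (i + 1)) := by
  simp [bdMu, Finset.prod_range_succ, div_mul_div_comm]

lemma bdMu_pos (ha : ∀ i, 1 ≤ i → 0 < a i) (hb : ∀ i, 0 < b i) (i : ℕ) :
    0 < bdMu a b i := by
  apply div_pos
  · exact Finset.prod_pos fun k _ => hb k
  · exact Finset.prod_pos fun k _ => ha (k + 1) (Nat.le_add_left 1 k)

end aux

/-- the total dual mass dominates `b_0·R` (as values in `[0,∞]`), where
`R = Σ_i (1/(μ_i b_i)) Σ_{j=0}^i μ_j`.  In particular if `R = ∞` then `Σ_i μ*_i = ∞`. -/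
theorem total_dual_mass_ge
    (a b : ℕ → ℝ) (ha : ∀ i, 1 ≤ i → 0 < a i) (hb : ∀ i, 0 < b i)
    (hmu : Summable (bdMu a b)) :
    ENNReal.ofReal (b 0) *
        ∑' i : ℕ, ENNReal.ofReal
          ((1 / (bdMu a b i * b i)) * ∑ j ∈ Finset.range (i + 1), bdMu a b j) ≤
      ∑' i : ℕ, ENNReal.ofReal (bdMuStar a b i) ∧
    ((∑' i : ℕ, ENNReal.ofReal
        ((1 / (bdMu a b i * b i)) * ∑ j ∈ Finset.range (i + 1), bdMu a b j)) = ⊤ →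
      (∑' i : ℕ, ENNReal.ofReal (bdMuStar a b i)) = ⊤) := by
  have hmup := bdMu_pos a b ha hb
  set S : ℕ → ℝ := fun i => ∑ j ∈ Finset.range (i + 1), bdMu a b j with hS
  have hSpos : ∀ i, 0 < S i := fun i =>
    Finset.sum_pos (fun j _ => hmup j) (by simp)
  have hS1 : ∀ i, 1 ≤ S i := by
    intro i
    calc (1:ℝ) = bdMu a b 0 := (bdMu_zero a b).symm
    _ ≤ S i := Finset.single_le_sum (f := bdMu a b) (fun j _ => (hmup j).le)
        (Finset.mem_range.mpr (Nat.succ_pos i))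
  have hT : 0 < ∑' j : ℕ, bdMu a b j := by
    exact Summable.tsum_pos hmu (fun j => (hmup j).le) 0 (hmup 0)
  have hHeq : ∀ i, bdH a b i = S i / ∑' j : ℕ, bdMu a b j := by
    intro i
    simp [bdH, bdPi, hS, Finset.sum_div]
  have hHpos : ∀ i, 0 < bdH a b i := by
    intro i; rw [hHeq]; exact div_pos (hSpos i) hT
  -- key formula
  have key : ∀ i, bdMuStar a b i = S i ^ 2 * b 0 / (b i * bdMu a b i) := by
    intro i
    induction i with
    | zero =>
      simp [bdMuStar, bdMu_zero, hS]
      exact (div_self (hb 0).ne').symm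
    | succ n ih =>
      have h1 : bdMuStar a b (n + 1) =
          bdMuStar a b n * (bdBStar a b n / bdAStar a b (n + 1)) := by
        simpa [bdMuStar] using bdMu_succ (bdAStar a b) (bdBStar a b) n
      rw [h1, ih]
      have hratio : bdH a b (n + 1) / bdH a b n = S (n + 1) / S n := by
        rw [hHeq, hHeq]
        have h2 := hT.ne'
        have h3 := (hSpos n).ne'
        field_simp
      have hBS : bdBStar a b n = (S (n + 1) / S n) * a (n + 1) := by
        rw [bdBStar, hratio]
      have hAS : bdAStar a b (n + 1) = (S n / S (n + 1)) * b (n + 1) := by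
        rw [bdAStar]
        have : (n + 1 : ℕ) - 1 = n := rfl
        rw [this]
        congr 1
        rw [hHeq, hHeq]
        have h2 := hT.ne'
        have h3 := (hSpos (n + 1)).ne'
        field_simp
      rw [hBS, hAS, bdMu_succ]
      have hSn := (hSpos n).ne'
      have hSn1 := (hSpos (n + 1)).ne'
      have hbn := (hb n).ne'
      have hbn1 := (hb (n + 1)).ne'
      have han1 := (ha (n + 1) (Nat.le_add_left 1 n)).ne'
      have hmn := (hmup n).ne'
      field_simp
  -- pointwise bound
  have hpt : ∀ i, b 0 * ((1 / (bdMu a b i * b i)) * S i) ≤ bdMuStar a b i := by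
    intro i
    rw [key i]
    have h1 : b 0 * ((1 / (bdMu a b i * b i)) * S i)
        = S i * b 0 / (b i * bdMu a b i) := by ring
    rw [h1, sq]
    apply div_le_div_of_nonneg_right ?_ (mul_pos (hb i) (hmup i)).le
    have : S i * b 0 = 1 * (S i * b 0) := by ring
    rw [this, mul_assoc]
    exact mul_le_mul_of_nonneg_right (hS1 i) (mul_nonneg (hSpos i).le (hb 0).le)
  have hmain : ENNReal.ofReal (b 0) *
      ∑' i : ℕ, ENNReal.ofReal ((1 / (bdMu a b i * b i)) * S i) ≤
      ∑' i : ℕ, ENNReal.ofReal (bdMuStar a b i) := by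
    rw [← ENNReal.tsum_mul_left]
    apply ENNReal.tsum_le_tsum
    intro i
    rw [← ENNReal.ofReal_mul (hb 0).le]
    exact ENNReal.ofReal_le_ofReal (hpt i)
  refine ⟨hmain, fun htop => ?_⟩
  have htop' : (∑' i : ℕ, ENNReal.ofReal ((1 / (bdMu a b i * b i)) * S i)) = ⊤ := htop
  have h2 := hmain
  rw [htop', ENNReal.mul_top (ENNReal.ofReal_pos.mpr (hb 0)).ne'] at h2
  exact top_le_iff.mp h2
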